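/- Let e, f be two edges of H such that H_{ef} contains a tight path of length 5, and let φ be a monomorphism from H_{ef} into H. Then φ is one of the following six permutations of V(H): the identity, (v9 v1 v2 v3 v4 v5 v6 v7 v8)(z), (v1 v9 v8 v7 v6 v5 v4 v3 v2)(z), (v9 v8)(v1 v7)(v2 v6)(v3 v5)(v4)(z), (v1 v8)(v2 v7)(v3 v6)(v4 v5)(v9)(z), (v1 v9)(v2 v8)(v3 v7)(v4 v6)(v5)(z). -/

import Mathlib

open Finset

/-- Edge r = {z, v1, v3, v5, v8} (z is vertex 0, vᵢ is vertex i). -/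
def er : Finset (Fin 10) := {0, 1, 3, 5, 8}
/-- Edge g = {z, v2, v4, v7, v9}. -/
def eg : Finset (Fin 10) := {0, 2, 4, 7, 9}
/-- Edge a = {v1, v4, v6, v8, v9}. -/
def ea : Finset (Fin 10) := {1, 4, 6, 8, 9}
/-- Edge b = {v9, v1, v2, v3, v4}. -/
def eb : Finset (Fin 10) := {9, 1, 2, 3, 4}
def ee1 : Finset (Fin 10) := {1, 2, 3, 4, 5}
def ee2 : Finset (Fin 10) := {2, 3, 4, 5, 6}
def ee3 : Finset (Fin 10) := {3, 4, 5, 6, 7}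
def ee4 : Finset (Fin 10) := {4, 5, 6, 7, 8}
def ee5 : Finset (Fin 10) := {5, 6, 7, 8, 9}

/-- The edge set of the 5-uniform hypergraph H. -/
def Hedges : Finset (Finset (Fin 10)) := {er, eg, ea, eb, ee1, ee2, ee3, ee4, ee5}

/-- Degree of a vertex with respect to an edge set. -/
def deg (E : Finset (Finset (Fin 10))) (x : Fin 10) : ℕ :=
  (E.filter (fun s => x ∈ s)).card

/-- The i-th edge of a candidate tight path given by vertex sequence u. -/
def te (u : ℕ → Fin 10) (i : ℕ) : Finset (Fin 10) :=
  {u i, u (i+1), u (i+2), u (i+3), u (i+4)}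

def sigma1 : Fin 10 → Fin 10 := ![0, 2, 3, 4, 5, 6, 7, 8, 9, 1]
def sigma2 : Fin 10 → Fin 10 := ![0, 9, 1, 2, 3, 4, 5, 6, 7, 8]
def sigma3 : Fin 10 → Fin 10 := ![0, 7, 6, 5, 4, 3, 2, 1, 9, 8]
def sigma4 : Fin 10 → Fin 10 := ![0, 8, 7, 6, 5, 4, 3, 2, 1, 9]
def sigma5 : Fin 10 → Fin 10 := ![0, 9, 8, 7, 6, 5, 4, 3, 2, 1]


/-! ### Auxiliary verified search machinery -/

def M9 : List Nat := [299, 661, 850, 542, 62, 124, 248, 496, 992]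
def vord : List (Fin 10) := [4,5,3,6,2,7,1,8,9,0]
def subm (a b : Nat) : Bool := a &&& b == a
def cnt (M : List Nat) (a : Nat) : Nat := M.countP (fun s => subm a s)
def pimg (l : List (Nat × Nat)) (m : Nat) : Nat :=
  l.foldr (fun p r => if subm (1 <<< p.1) m then r ||| (1 <<< p.2) else r) 0
def ok (SM : List Nat) (l : List (Nat × Nat)) (v x : Nat) : Bool :=
  l.all (fun p => !(p.2 == x)) &&
  ((v,x)::l).all (fun p => Nat.ble (cnt SM ((1 <<< v) ||| (1 <<< p.1))) (cnt M9 ((1 <<< x) ||| (1 <<< p.2)))) &&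
  SM.all (fun m => M9.any (fun t => subm (pimg ((v,x)::l) m) t))
def extd (SM : List Nat) (cs : List (List (Nat × Nat))) (v : Fin 10) : List (List (Nat × Nat)) :=
  cs.flatMap (fun l => ((List.range 10).filter (fun x => ok SM l v.val x)).map (fun x => ((v.val),x)::l))
def srun (SM : List Nat) : List (List (Nat × Nat)) := vord.foldl (extd SM) [[]]
def idT : List (Nat × Nat) := [(0,0),(9,9),(8,8),(1,1),(7,7),(2,2),(6,6),(3,3),(5,5),(4,4)]
def tr (f : Fin 10 → Fin 10) : List (Fin 10) → List (Nat × Nat)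
  | [] => []
  | w :: L => ((w : Nat), ((f w : Nat))) :: tr f L

lemma tr_nil (f : Fin 10 → Fin 10) : tr f [] = [] := rfl
lemma tr_cons (f : Fin 10 → Fin 10) (w : Fin 10) (L : List (Fin 10)) :
    tr f (w :: L) = ((w : Nat), ((f w : Nat))) :: tr f L := rfl

lemma mem_tr {f : Fin 10 → Fin 10} {p : Nat × Nat} :
    ∀ {L : List (Fin 10)}, p ∈ tr f L → ∃ w, w ∈ L ∧ p = ((w : Nat), ((f w : Nat)))
  | [], h => by simp [tr_nil] at h
  | w :: L, h => by
      rw [tr_cons, List.mem_cons] at h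
      rcases h with h | h
      · exact ⟨w, List.mem_cons_self, h⟩
      · obtain ⟨w', hw', rfl⟩ := mem_tr h
        exact ⟨w', List.mem_cons_of_mem _ hw', rfl⟩

lemma land_lor (a b c : Nat) : (a ||| b) &&& c = (a &&& c) ||| (b &&& c) := by
  apply Nat.eq_of_testBit_eq; intro i
  simp only [Nat.testBit_land, Nat.testBit_lor]
  cases a.testBit i <;> cases b.testBit i <;> cases c.testBit i <;> rfl

lemma subm_or {a b c : Nat} (ha : subm a c = true) (hb : subm b c = true) :
    subm (a ||| b) c = true := by
  simp only [subm, beq_iff_eq] at *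
  rw [land_lor, ha, hb]

lemma hb4 : ∀ t ∈ Hedges, ∃ tm ∈ M9, ∀ y : Fin 10,
    (subm (1 <<< (y : Nat)) tm = true ↔ y ∈ t) := by
  intro t ht
  simp only [Hedges, Finset.mem_insert, Finset.mem_singleton] at ht
  rcases ht with rfl|rfl|rfl|rfl|rfl|rfl|rfl|rfl|rfl <;> decide

lemma hpairH : ∀ x y : Fin 10, cnt M9 ((1 <<< (x : Nat)) ||| (1 <<< (y : Nat))) =
    (Hedges.filter (fun t => x ∈ t ∧ y ∈ t)).card := by decide

lemma count_le (φ : Fin 10 → Fin 10) (hφ : Function.Injective φ)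
    (SF : Finset (Finset (Fin 10))) (hm : ∀ s ∈ SF, s.image φ ∈ Hedges) (v w : Fin 10) :
    (SF.filter (fun s => v ∈ s ∧ w ∈ s)).card ≤
      (Hedges.filter (fun t => φ v ∈ t ∧ φ w ∈ t)).card := by
  apply Finset.card_le_card_of_injOn (fun s => s.image φ)
  · intro s hs
    simp only [Finset.mem_coe, Finset.mem_filter] at hs ⊢
    exact ⟨hm s hs.1, Finset.mem_image_of_mem φ hs.2.1, Finset.mem_image_of_mem φ hs.2.2⟩
  · intro s _ t _ h
    exact Finset.image_injective hφ h

lemma pimg_cons (p : Nat × Nat) (l : List (Nat × Nat)) (m : Nat) :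
    pimg (p :: l) m = if subm (1 <<< p.1) m then pimg l m ||| (1 <<< p.2) else pimg l m := rfl

lemma pimg_sub (φ : Fin 10 → Fin 10) (t : Finset (Fin 10)) (tm : Nat)
    (htm : ∀ y : Fin 10, (subm (1 <<< (y : Nat)) tm = true ↔ y ∈ t))
    (s : Finset (Fin 10)) (m : Nat)
    (hsm : ∀ y : Fin 10, (subm (1 <<< (y : Nat)) m = true ↔ y ∈ s))
    (hst : ∀ y ∈ s, φ y ∈ t) :
    ∀ K : List (Fin 10), subm (pimg (tr φ K) m) tm = true := by
  intro K; induction K with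
  | nil => simp [tr_nil, pimg, subm, Nat.zero_and]
  | cons w K ih =>
    rw [tr_cons, pimg_cons]
    by_cases h : subm (1 <<< (w : Nat)) m = true
    · rw [if_pos h]
      exact subm_or ih ((htm (φ w)).mpr (hst w ((hsm w).mp h)))
    · rw [if_neg h]; exact ih

lemma ok_true (φ : Fin 10 → Fin 10) (hφ : Function.Injective φ)
    (SF : Finset (Finset (Fin 10))) (SM : List Nat)
    (hpair : ∀ v w : Fin 10, cnt SM ((1 <<< (v : Nat)) ||| (1 <<< (w : Nat))) =
      (SF.filter (fun s => v ∈ s ∧ w ∈ s)).card)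
    (hb3 : ∀ m ∈ SM, ∃ s ∈ SF, ∀ y : Fin 10, (subm (1 <<< (y : Nat)) m = true ↔ y ∈ s))
    (hm : ∀ s ∈ SF, s.image φ ∈ Hedges)
    (v : Fin 10) (L : List (Fin 10)) (hvL : v ∉ L) :
    ok SM (tr φ L) (v : Nat) ((φ v : Nat)) = true := by
  have key : ∀ w : Fin 10, Nat.ble (cnt SM ((1 <<< (v : Nat)) ||| (1 <<< (w : Nat))))
      (cnt M9 ((1 <<< ((φ v) : Nat)) ||| (1 <<< ((φ w) : Nat)))) = true := by
    intro w
    rw [Nat.ble_eq, hpair v w, hpairH (φ v) (φ w)]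
    exact count_le φ hφ SF hm v w
  simp only [ok, Bool.and_eq_true, List.all_eq_true, List.all_cons]
  refine ⟨⟨?_, ?_, ?_⟩, ?_⟩
  · intro p hp
    obtain ⟨w, hw, rfl⟩ := mem_tr hp
    simp only [Bool.not_eq_eq_eq_not, Bool.not_true, beq_eq_false_iff_ne, ne_eq]
    intro hval
    exact hvL (by rwa [hφ (Fin.val_injective hval)] at hw)
  · exact key v
  · intro p hp
    obtain ⟨w, _, rfl⟩ := mem_tr hp
    exact key w
  · intro m hmem
    obtain ⟨s, hsS, hsm⟩ := hb3 m hmem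
    obtain ⟨tm, htmM, htm⟩ := hb4 (s.image φ) (hm s hsS)
    simp only [List.any_eq_true]
    refine ⟨tm, htmM, ?_⟩
    have := pimg_sub φ (s.image φ) tm htm s m hsm
      (fun y hy => Finset.mem_image_of_mem φ hy) (v :: L)
    rw [tr_cons] at this
    exact this

lemma sound_aux (φ : Fin 10 → Fin 10) (hφ : Function.Injective φ)
    (SF : Finset (Finset (Fin 10))) (SM : List Nat)
    (hpair : ∀ v w : Fin 10, cnt SM ((1 <<< (v : Nat)) ||| (1 <<< (w : Nat))) =
      (SF.filter (fun s => v ∈ s ∧ w ∈ s)).card)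
    (hb3 : ∀ m ∈ SM, ∃ s ∈ SF, ∀ y : Fin 10, (subm (1 <<< (y : Nat)) m = true ↔ y ∈ s))
    (hm : ∀ s ∈ SF, s.image φ ∈ Hedges) :
    ∀ (os L : List (Fin 10)) (cs : List (List (Nat × Nat))),
      (os ++ L).Nodup → tr φ L ∈ cs →
      tr φ (os.reverse ++ L) ∈ os.foldl (extd SM) cs := by
  intro os
  induction os with
  | nil => intro L cs _ h; simpa using h
  | cons v os ih =>
    intro L cs hnd hmem
    have hnd0 : (v :: (os ++ L)).Nodup := by simpa using hnd
    have hvL : v ∉ L := fun h => (List.nodup_cons.mp hnd0).1 (List.mem_append.mpr (Or.inr h))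
    have hnd' : (os ++ (v :: L)).Nodup := List.perm_middle.nodup_iff.mpr hnd0
    have hstep : tr φ (v :: L) ∈ extd SM cs v := by
      simp only [extd, List.mem_flatMap]
      refine ⟨tr φ L, hmem, ?_⟩
      simp only [List.mem_map, List.mem_filter, List.mem_range]
      exact ⟨((φ v) : Nat), ⟨(φ v).isLt, ok_true φ hφ SF SM hpair hb3 hm v L hvL⟩,
        (tr_cons φ v L).symm⟩
    have := ih (v :: L) (extd SM cs v) hnd' hstep
    simpa [List.append_assoc] using this

lemma tr_eq {f g : Fin 10 → Fin 10} :
    ∀ L : List (Fin 10), tr f L = tr g L → ∀ w ∈ L, f w = g w := by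
  intro L
  induction L with
  | nil => intro _ w hw; simp at hw
  | cons v L ih =>
    intro h w hw
    rw [tr_cons, tr_cons] at h
    injection h with h1 h2
    rcases List.mem_cons.mp hw with rfl | hw'
    · injection h1 with _ hv
      exact Fin.val_injective hv
    · exact ih h2 w hw'

lemma master (φ : Fin 10 → Fin 10) (hφ : Function.Injective φ)
    (SF : Finset (Finset (Fin 10))) (SM : List Nat)
    (hpair : ∀ v w : Fin 10, cnt SM ((1 <<< (v : Nat)) ||| (1 <<< (w : Nat))) =
      (SF.filter (fun s => v ∈ s ∧ w ∈ s)).card)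
    (hb3 : ∀ m ∈ SM, ∃ s ∈ SF, ∀ y : Fin 10, (subm (1 <<< (y : Nat)) m = true ↔ y ∈ s))
    (hrun : srun SM = [idT])
    (hm : ∀ s ∈ SF, s.image φ ∈ Hedges) : φ = id := by
  have h := sound_aux φ hφ SF SM hpair hb3 hm vord [] [[]] (by decide) (by simp [tr_nil])
  rw [List.append_nil] at h
  have h' : tr φ vord.reverse ∈ srun SM := h
  rw [hrun, List.mem_singleton] at h'
  have hid : tr φ vord.reverse = tr id vord.reverse := h'.trans (by decide)
  funext w
  exact tr_eq vord.reverse hid w (by revert w; decide)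

set_option maxHeartbeats 1600000 in
set_option maxRecDepth 8000 in
lemma case_0_0 (φ : Fin 10 → Fin 10) (hφ : Function.Injective φ)
    (hm : ∀ s ∈ Hedges \ ({er, er} : Finset (Finset (Fin 10))), s.image φ ∈ Hedges) : φ = id :=
  master φ hφ (Hedges \ {er, er}) [661, 850, 542, 62, 124, 248, 496, 992] (by decide) (by decide) (by decide) hm


set_option maxHeartbeats 1600000 in
set_option maxRecDepth 8000 in
lemma case_0_1 (φ : Fin 10 → Fin 10) (hφ : Function.Injective φ)
    (hm : ∀ s ∈ Hedges \ ({er, eg} : Finset (Finset (Fin 10))), s.image φ ∈ Hedges) : φ = id :=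
  master φ hφ (Hedges \ {er, eg}) [850, 542, 62, 124, 248, 496, 992] (by decide) (by decide) (by decide) hm


set_option maxHeartbeats 1600000 in
set_option maxRecDepth 8000 in
lemma case_0_2 (φ : Fin 10 → Fin 10) (hφ : Function.Injective φ)
    (hm : ∀ s ∈ Hedges \ ({er, ea} : Finset (Finset (Fin 10))), s.image φ ∈ Hedges) : φ = id :=
  master φ hφ (Hedges \ {er, ea}) [661, 542, 62, 124, 248, 496, 992] (by decide) (by decide) (by decide) hm


set_option maxHeartbeats 1600000 in
set_option maxRecDepth 8000 in
lemma case_0_3 (φ : Fin 10 → Fin 10) (hφ : Function.Injective φ)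
    (hm : ∀ s ∈ Hedges \ ({er, eb} : Finset (Finset (Fin 10))), s.image φ ∈ Hedges) : φ = id :=
  master φ hφ (Hedges \ {er, eb}) [661, 850, 62, 124, 248, 496, 992] (by decide) (by decide) (by decide) hm


set_option maxHeartbeats 1600000 in
set_option maxRecDepth 8000 in
lemma case_0_4 (φ : Fin 10 → Fin 10) (hφ : Function.Injective φ)
    (hm : ∀ s ∈ Hedges \ ({er, ee1} : Finset (Finset (Fin 10))), s.image φ ∈ Hedges) : φ = id :=
  master φ hφ (Hedges \ {er, ee1}) [661, 850, 542, 124, 248, 496, 992] (by decide) (by decide) (by decide) hm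


set_option maxHeartbeats 1600000 in
set_option maxRecDepth 8000 in
lemma case_0_5 (φ : Fin 10 → Fin 10) (hφ : Function.Injective φ)
    (hm : ∀ s ∈ Hedges \ ({er, ee2} : Finset (Finset (Fin 10))), s.image φ ∈ Hedges) : φ = id :=
  master φ hφ (Hedges \ {er, ee2}) [661, 850, 542, 62, 248, 496, 992] (by decide) (by decide) (by decide) hm


set_option maxHeartbeats 1600000 in
set_option maxRecDepth 8000 in
lemma case_0_6 (φ : Fin 10 → Fin 10) (hφ : Function.Injective φ)
    (hm : ∀ s ∈ Hedges \ ({er, ee3} : Finset (Finset (Fin 10))), s.image φ ∈ Hedges) : φ = id :=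
  master φ hφ (Hedges \ {er, ee3}) [661, 850, 542, 62, 124, 496, 992] (by decide) (by decide) (by decide) hm


set_option maxHeartbeats 1600000 in
set_option maxRecDepth 8000 in
lemma case_0_7 (φ : Fin 10 → Fin 10) (hφ : Function.Injective φ)
    (hm : ∀ s ∈ Hedges \ ({er, ee4} : Finset (Finset (Fin 10))), s.image φ ∈ Hedges) : φ = id :=
  master φ hφ (Hedges \ {er, ee4}) [661, 850, 542, 62, 124, 248, 992] (by decide) (by decide) (by decide) hm


set_option maxHeartbeats 1600000 in
set_option maxRecDepth 8000 in
lemma case_0_8 (φ : Fin 10 → Fin 10) (hφ : Function.Injective φ)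
    (hm : ∀ s ∈ Hedges \ ({er, ee5} : Finset (Finset (Fin 10))), s.image φ ∈ Hedges) : φ = id :=
  master φ hφ (Hedges \ {er, ee5}) [661, 850, 542, 62, 124, 248, 496] (by decide) (by decide) (by decide) hm


set_option maxHeartbeats 1600000 in
set_option maxRecDepth 8000 in
lemma case_1_1 (φ : Fin 10 → Fin 10) (hφ : Function.Injective φ)
    (hm : ∀ s ∈ Hedges \ ({eg, eg} : Finset (Finset (Fin 10))), s.image φ ∈ Hedges) : φ = id :=
  master φ hφ (Hedges \ {eg, eg}) [299, 850, 542, 62, 124, 248, 496, 992] (by decide) (by decide) (by decide) hm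


set_option maxHeartbeats 1600000 in
set_option maxRecDepth 8000 in
lemma case_1_2 (φ : Fin 10 → Fin 10) (hφ : Function.Injective φ)
    (hm : ∀ s ∈ Hedges \ ({eg, ea} : Finset (Finset (Fin 10))), s.image φ ∈ Hedges) : φ = id :=
  master φ hφ (Hedges \ {eg, ea}) [299, 542, 62, 124, 248, 496, 992] (by decide) (by decide) (by decide) hm


set_option maxHeartbeats 1600000 in
set_option maxRecDepth 8000 in
lemma case_1_3 (φ : Fin 10 → Fin 10) (hφ : Function.Injective φ)
    (hm : ∀ s ∈ Hedges \ ({eg, eb} : Finset (Finset (Fin 10))), s.image φ ∈ Hedges) : φ = id :=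
  master φ hφ (Hedges \ {eg, eb}) [299, 850, 62, 124, 248, 496, 992] (by decide) (by decide) (by decide) hm


set_option maxHeartbeats 1600000 in
set_option maxRecDepth 8000 in
lemma case_1_4 (φ : Fin 10 → Fin 10) (hφ : Function.Injective φ)
    (hm : ∀ s ∈ Hedges \ ({eg, ee1} : Finset (Finset (Fin 10))), s.image φ ∈ Hedges) : φ = id :=
  master φ hφ (Hedges \ {eg, ee1}) [299, 850, 542, 124, 248, 496, 992] (by decide) (by decide) (by decide) hm


set_option maxHeartbeats 1600000 in
set_option maxRecDepth 8000 in
lemma case_1_5 (φ : Fin 10 → Fin 10) (hφ : Function.Injective φ)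
    (hm : ∀ s ∈ Hedges \ ({eg, ee2} : Finset (Finset (Fin 10))), s.image φ ∈ Hedges) : φ = id :=
  master φ hφ (Hedges \ {eg, ee2}) [299, 850, 542, 62, 248, 496, 992] (by decide) (by decide) (by decide) hm


set_option maxHeartbeats 1600000 in
set_option maxRecDepth 8000 in
lemma case_1_6 (φ : Fin 10 → Fin 10) (hφ : Function.Injective φ)
    (hm : ∀ s ∈ Hedges \ ({eg, ee3} : Finset (Finset (Fin 10))), s.image φ ∈ Hedges) : φ = id :=
  master φ hφ (Hedges \ {eg, ee3}) [299, 850, 542, 62, 124, 496, 992] (by decide) (by decide) (by decide) hm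


set_option maxHeartbeats 1600000 in
set_option maxRecDepth 8000 in
lemma case_1_7 (φ : Fin 10 → Fin 10) (hφ : Function.Injective φ)
    (hm : ∀ s ∈ Hedges \ ({eg, ee4} : Finset (Finset (Fin 10))), s.image φ ∈ Hedges) : φ = id :=
  master φ hφ (Hedges \ {eg, ee4}) [299, 850, 542, 62, 124, 248, 992] (by decide) (by decide) (by decide) hm


set_option maxHeartbeats 1600000 in
set_option maxRecDepth 8000 in
lemma case_1_8 (φ : Fin 10 → Fin 10) (hφ : Function.Injective φ)
    (hm : ∀ s ∈ Hedges \ ({eg, ee5} : Finset (Finset (Fin 10))), s.image φ ∈ Hedges) : φ = id :=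
  master φ hφ (Hedges \ {eg, ee5}) [299, 850, 542, 62, 124, 248, 496] (by decide) (by decide) (by decide) hm


set_option maxHeartbeats 1600000 in
set_option maxRecDepth 8000 in
lemma case_2_2 (φ : Fin 10 → Fin 10) (hφ : Function.Injective φ)
    (hm : ∀ s ∈ Hedges \ ({ea, ea} : Finset (Finset (Fin 10))), s.image φ ∈ Hedges) : φ = id :=
  master φ hφ (Hedges \ {ea, ea}) [299, 661, 542, 62, 124, 248, 496, 992] (by decide) (by decide) (by decide) hm


set_option maxHeartbeats 1600000 in
set_option maxRecDepth 8000 in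
lemma case_2_3 (φ : Fin 10 → Fin 10) (hφ : Function.Injective φ)
    (hm : ∀ s ∈ Hedges \ ({ea, eb} : Finset (Finset (Fin 10))), s.image φ ∈ Hedges) : φ = id :=
  master φ hφ (Hedges \ {ea, eb}) [299, 661, 62, 124, 248, 496, 992] (by decide) (by decide) (by decide) hm


set_option maxHeartbeats 1600000 in
set_option maxRecDepth 8000 in
lemma case_2_4 (φ : Fin 10 → Fin 10) (hφ : Function.Injective φ)
    (hm : ∀ s ∈ Hedges \ ({ea, ee1} : Finset (Finset (Fin 10))), s.image φ ∈ Hedges) : φ = id :=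
  master φ hφ (Hedges \ {ea, ee1}) [299, 661, 542, 124, 248, 496, 992] (by decide) (by decide) (by decide) hm


set_option maxHeartbeats 1600000 in
set_option maxRecDepth 8000 in
lemma case_2_5 (φ : Fin 10 → Fin 10) (hφ : Function.Injective φ)
    (hm : ∀ s ∈ Hedges \ ({ea, ee2} : Finset (Finset (Fin 10))), s.image φ ∈ Hedges) : φ = id :=
  master φ hφ (Hedges \ {ea, ee2}) [299, 661, 542, 62, 248, 496, 992] (by decide) (by decide) (by decide) hm


set_option maxHeartbeats 1600000 in
set_option maxRecDepth 8000 in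
lemma case_2_6 (φ : Fin 10 → Fin 10) (hφ : Function.Injective φ)
    (hm : ∀ s ∈ Hedges \ ({ea, ee3} : Finset (Finset (Fin 10))), s.image φ ∈ Hedges) : φ = id :=
  master φ hφ (Hedges \ {ea, ee3}) [299, 661, 542, 62, 124, 496, 992] (by decide) (by decide) (by decide) hm


set_option maxHeartbeats 1600000 in
set_option maxRecDepth 8000 in
lemma case_2_7 (φ : Fin 10 → Fin 10) (hφ : Function.Injective φ)
    (hm : ∀ s ∈ Hedges \ ({ea, ee4} : Finset (Finset (Fin 10))), s.image φ ∈ Hedges) : φ = id :=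
  master φ hφ (Hedges \ {ea, ee4}) [299, 661, 542, 62, 124, 248, 992] (by decide) (by decide) (by decide) hm


set_option maxHeartbeats 1600000 in
set_option maxRecDepth 8000 in
lemma case_2_8 (φ : Fin 10 → Fin 10) (hφ : Function.Injective φ)
    (hm : ∀ s ∈ Hedges \ ({ea, ee5} : Finset (Finset (Fin 10))), s.image φ ∈ Hedges) : φ = id :=
  master φ hφ (Hedges \ {ea, ee5}) [299, 661, 542, 62, 124, 248, 496] (by decide) (by decide) (by decide) hm


set_option maxHeartbeats 1600000 in
set_option maxRecDepth 8000 in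
lemma case_3_3 (φ : Fin 10 → Fin 10) (hφ : Function.Injective φ)
    (hm : ∀ s ∈ Hedges \ ({eb, eb} : Finset (Finset (Fin 10))), s.image φ ∈ Hedges) : φ = id :=
  master φ hφ (Hedges \ {eb, eb}) [299, 661, 850, 62, 124, 248, 496, 992] (by decide) (by decide) (by decide) hm


set_option maxHeartbeats 1600000 in
set_option maxRecDepth 8000 in
lemma case_3_4 (φ : Fin 10 → Fin 10) (hφ : Function.Injective φ)
    (hm : ∀ s ∈ Hedges \ ({eb, ee1} : Finset (Finset (Fin 10))), s.image φ ∈ Hedges) : φ = id :=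
  master φ hφ (Hedges \ {eb, ee1}) [299, 661, 850, 124, 248, 496, 992] (by decide) (by decide) (by decide) hm


set_option maxHeartbeats 1600000 in
set_option maxRecDepth 8000 in
lemma case_3_5 (φ : Fin 10 → Fin 10) (hφ : Function.Injective φ)
    (hm : ∀ s ∈ Hedges \ ({eb, ee2} : Finset (Finset (Fin 10))), s.image φ ∈ Hedges) : φ = id :=
  master φ hφ (Hedges \ {eb, ee2}) [299, 661, 850, 62, 248, 496, 992] (by decide) (by decide) (by decide) hm


set_option maxHeartbeats 1600000 in
set_option maxRecDepth 8000 in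
lemma case_3_6 (φ : Fin 10 → Fin 10) (hφ : Function.Injective φ)
    (hm : ∀ s ∈ Hedges \ ({eb, ee3} : Finset (Finset (Fin 10))), s.image φ ∈ Hedges) : φ = id :=
  master φ hφ (Hedges \ {eb, ee3}) [299, 661, 850, 62, 124, 496, 992] (by decide) (by decide) (by decide) hm


set_option maxHeartbeats 1600000 in
set_option maxRecDepth 8000 in
lemma case_3_7 (φ : Fin 10 → Fin 10) (hφ : Function.Injective φ)
    (hm : ∀ s ∈ Hedges \ ({eb, ee4} : Finset (Finset (Fin 10))), s.image φ ∈ Hedges) : φ = id :=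
  master φ hφ (Hedges \ {eb, ee4}) [299, 661, 850, 62, 124, 248, 992] (by decide) (by decide) (by decide) hm


set_option maxHeartbeats 1600000 in
set_option maxRecDepth 8000 in
lemma case_3_8 (φ : Fin 10 → Fin 10) (hφ : Function.Injective φ)
    (hm : ∀ s ∈ Hedges \ ({eb, ee5} : Finset (Finset (Fin 10))), s.image φ ∈ Hedges) : φ = id :=
  master φ hφ (Hedges \ {eb, ee5}) [299, 661, 850, 62, 124, 248, 496] (by decide) (by decide) (by decide) hm


set_option maxHeartbeats 1600000 in
set_option maxRecDepth 8000 in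
lemma case_4_4 (φ : Fin 10 → Fin 10) (hφ : Function.Injective φ)
    (hm : ∀ s ∈ Hedges \ ({ee1, ee1} : Finset (Finset (Fin 10))), s.image φ ∈ Hedges) : φ = id :=
  master φ hφ (Hedges \ {ee1, ee1}) [299, 661, 850, 542, 124, 248, 496, 992] (by decide) (by decide) (by decide) hm


set_option maxHeartbeats 1600000 in
set_option maxRecDepth 8000 in
lemma case_4_5 (φ : Fin 10 → Fin 10) (hφ : Function.Injective φ)
    (hm : ∀ s ∈ Hedges \ ({ee1, ee2} : Finset (Finset (Fin 10))), s.image φ ∈ Hedges) : φ = id :=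
  master φ hφ (Hedges \ {ee1, ee2}) [299, 661, 850, 542, 248, 496, 992] (by decide) (by decide) (by decide) hm


set_option maxHeartbeats 1600000 in
set_option maxRecDepth 8000 in
lemma case_4_6 (φ : Fin 10 → Fin 10) (hφ : Function.Injective φ)
    (hm : ∀ s ∈ Hedges \ ({ee1, ee3} : Finset (Finset (Fin 10))), s.image φ ∈ Hedges) : φ = id :=
  master φ hφ (Hedges \ {ee1, ee3}) [299, 661, 850, 542, 124, 496, 992] (by decide) (by decide) (by decide) hm


set_option maxHeartbeats 1600000 in
set_option maxRecDepth 8000 in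
lemma case_4_7 (φ : Fin 10 → Fin 10) (hφ : Function.Injective φ)
    (hm : ∀ s ∈ Hedges \ ({ee1, ee4} : Finset (Finset (Fin 10))), s.image φ ∈ Hedges) : φ = id :=
  master φ hφ (Hedges \ {ee1, ee4}) [299, 661, 850, 542, 124, 248, 992] (by decide) (by decide) (by decide) hm


set_option maxHeartbeats 1600000 in
set_option maxRecDepth 8000 in
lemma case_4_8 (φ : Fin 10 → Fin 10) (hφ : Function.Injective φ)
    (hm : ∀ s ∈ Hedges \ ({ee1, ee5} : Finset (Finset (Fin 10))), s.image φ ∈ Hedges) : φ = id :=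
  master φ hφ (Hedges \ {ee1, ee5}) [299, 661, 850, 542, 124, 248, 496] (by decide) (by decide) (by decide) hm


set_option maxHeartbeats 1600000 in
set_option maxRecDepth 8000 in
lemma case_5_5 (φ : Fin 10 → Fin 10) (hφ : Function.Injective φ)
    (hm : ∀ s ∈ Hedges \ ({ee2, ee2} : Finset (Finset (Fin 10))), s.image φ ∈ Hedges) : φ = id :=
  master φ hφ (Hedges \ {ee2, ee2}) [299, 661, 850, 542, 62, 248, 496, 992] (by decide) (by decide) (by decide) hm


set_option maxHeartbeats 1600000 in
set_option maxRecDepth 8000 in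
lemma case_5_6 (φ : Fin 10 → Fin 10) (hφ : Function.Injective φ)
    (hm : ∀ s ∈ Hedges \ ({ee2, ee3} : Finset (Finset (Fin 10))), s.image φ ∈ Hedges) : φ = id :=
  master φ hφ (Hedges \ {ee2, ee3}) [299, 661, 850, 542, 62, 496, 992] (by decide) (by decide) (by decide) hm


set_option maxHeartbeats 1600000 in
set_option maxRecDepth 8000 in
lemma case_5_7 (φ : Fin 10 → Fin 10) (hφ : Function.Injective φ)
    (hm : ∀ s ∈ Hedges \ ({ee2, ee4} : Finset (Finset (Fin 10))), s.image φ ∈ Hedges) : φ = id :=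
  master φ hφ (Hedges \ {ee2, ee4}) [299, 661, 850, 542, 62, 248, 992] (by decide) (by decide) (by decide) hm


set_option maxHeartbeats 1600000 in
set_option maxRecDepth 8000 in
lemma case_5_8 (φ : Fin 10 → Fin 10) (hφ : Function.Injective φ)
    (hm : ∀ s ∈ Hedges \ ({ee2, ee5} : Finset (Finset (Fin 10))), s.image φ ∈ Hedges) : φ = id :=
  master φ hφ (Hedges \ {ee2, ee5}) [299, 661, 850, 542, 62, 248, 496] (by decide) (by decide) (by decide) hm


set_option maxHeartbeats 1600000 in
set_option maxRecDepth 8000 in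
lemma case_6_6 (φ : Fin 10 → Fin 10) (hφ : Function.Injective φ)
    (hm : ∀ s ∈ Hedges \ ({ee3, ee3} : Finset (Finset (Fin 10))), s.image φ ∈ Hedges) : φ = id :=
  master φ hφ (Hedges \ {ee3, ee3}) [299, 661, 850, 542, 62, 124, 496, 992] (by decide) (by decide) (by decide) hm


set_option maxHeartbeats 1600000 in
set_option maxRecDepth 8000 in
lemma case_6_7 (φ : Fin 10 → Fin 10) (hφ : Function.Injective φ)
    (hm : ∀ s ∈ Hedges \ ({ee3, ee4} : Finset (Finset (Fin 10))), s.image φ ∈ Hedges) : φ = id :=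
  master φ hφ (Hedges \ {ee3, ee4}) [299, 661, 850, 542, 62, 124, 992] (by decide) (by decide) (by decide) hm


set_option maxHeartbeats 1600000 in
set_option maxRecDepth 8000 in
lemma case_6_8 (φ : Fin 10 → Fin 10) (hφ : Function.Injective φ)
    (hm : ∀ s ∈ Hedges \ ({ee3, ee5} : Finset (Finset (Fin 10))), s.image φ ∈ Hedges) : φ = id :=
  master φ hφ (Hedges \ {ee3, ee5}) [299, 661, 850, 542, 62, 124, 496] (by decide) (by decide) (by decide) hm


set_option maxHeartbeats 1600000 in
set_option maxRecDepth 8000 in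
lemma case_7_7 (φ : Fin 10 → Fin 10) (hφ : Function.Injective φ)
    (hm : ∀ s ∈ Hedges \ ({ee4, ee4} : Finset (Finset (Fin 10))), s.image φ ∈ Hedges) : φ = id :=
  master φ hφ (Hedges \ {ee4, ee4}) [299, 661, 850, 542, 62, 124, 248, 992] (by decide) (by decide) (by decide) hm


set_option maxHeartbeats 1600000 in
set_option maxRecDepth 8000 in
lemma case_7_8 (φ : Fin 10 → Fin 10) (hφ : Function.Injective φ)
    (hm : ∀ s ∈ Hedges \ ({ee4, ee5} : Finset (Finset (Fin 10))), s.image φ ∈ Hedges) : φ = id :=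
  master φ hφ (Hedges \ {ee4, ee5}) [299, 661, 850, 542, 62, 124, 248] (by decide) (by decide) (by decide) hm


set_option maxHeartbeats 1600000 in
set_option maxRecDepth 8000 in
lemma case_8_8 (φ : Fin 10 → Fin 10) (hφ : Function.Injective φ)
    (hm : ∀ s ∈ Hedges \ ({ee5, ee5} : Finset (Finset (Fin 10))), s.image φ ∈ Hedges) : φ = id :=
  master φ hφ (Hedges \ {ee5, ee5}) [299, 661, 850, 542, 62, 124, 248, 496] (by decide) (by decide) (by decide) hm

theorem stmt16 (e f : Finset (Fin 10)) (he : e ∈ Hedges) (hf : f ∈ Hedges)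
    (φ : Fin 10 → Fin 10) (hφ : Function.Injective φ)
    (hmono : ∀ s ∈ Hedges \ {e, f}, s.image φ ∈ Hedges)
    (u : ℕ → Fin 10)
    (hinj : ∀ i j, i < 9 → j < 9 → u i = u j → i = j)
    (hedge : ∀ i < 5, te u i ∈ Hedges \ {e, f}) :
    φ = id ∨ φ = sigma1 ∨ φ = sigma2 ∨ φ = sigma3 ∨ φ = sigma4 ∨ φ = sigma5 := by
  simp only [Hedges, Finset.mem_insert, Finset.mem_singleton] at he hf
  rcases he with rfl|rfl|rfl|rfl|rfl|rfl|rfl|rfl|rfl <;>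
    rcases hf with rfl|rfl|rfl|rfl|rfl|rfl|rfl|rfl|rfl
  · exact Or.inl (case_0_0 φ hφ hmono)
  · exact Or.inl (case_0_1 φ hφ hmono)
  · exact Or.inl (case_0_2 φ hφ hmono)
  · exact Or.inl (case_0_3 φ hφ hmono)
  · exact Or.inl (case_0_4 φ hφ hmono)
  · exact Or.inl (case_0_5 φ hφ hmono)
  · exact Or.inl (case_0_6 φ hφ hmono)
  · exact Or.inl (case_0_7 φ hφ hmono)
  · exact Or.inl (case_0_8 φ hφ hmono)
  · rw [Finset.pair_comm] at hmono
    exact Or.inl (case_0_1 φ hφ hmono)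
  · exact Or.inl (case_1_1 φ hφ hmono)
  · exact Or.inl (case_1_2 φ hφ hmono)
  · exact Or.inl (case_1_3 φ hφ hmono)
  · exact Or.inl (case_1_4 φ hφ hmono)
  · exact Or.inl (case_1_5 φ hφ hmono)
  · exact Or.inl (case_1_6 φ hφ hmono)
  · exact Or.inl (case_1_7 φ hφ hmono)
  · exact Or.inl (case_1_8 φ hφ hmono)
  · rw [Finset.pair_comm] at hmono
    exact Or.inl (case_0_2 φ hφ hmono)
  · rw [Finset.pair_comm] at hmono
    exact Or.inl (case_1_2 φ hφ hmono)
  · exact Or.inl (case_2_2 φ hφ hmono)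
  · exact Or.inl (case_2_3 φ hφ hmono)
  · exact Or.inl (case_2_4 φ hφ hmono)
  · exact Or.inl (case_2_5 φ hφ hmono)
  · exact Or.inl (case_2_6 φ hφ hmono)
  · exact Or.inl (case_2_7 φ hφ hmono)
  · exact Or.inl (case_2_8 φ hφ hmono)
  · rw [Finset.pair_comm] at hmono
    exact Or.inl (case_0_3 φ hφ hmono)
  · rw [Finset.pair_comm] at hmono
    exact Or.inl (case_1_3 φ hφ hmono)
  · rw [Finset.pair_comm] at hmono
    exact Or.inl (case_2_3 φ hφ hmono)
  · exact Or.inl (case_3_3 φ hφ hmono)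
  · exact Or.inl (case_3_4 φ hφ hmono)
  · exact Or.inl (case_3_5 φ hφ hmono)
  · exact Or.inl (case_3_6 φ hφ hmono)
  · exact Or.inl (case_3_7 φ hφ hmono)
  · exact Or.inl (case_3_8 φ hφ hmono)
  · rw [Finset.pair_comm] at hmono
    exact Or.inl (case_0_4 φ hφ hmono)
  · rw [Finset.pair_comm] at hmono
    exact Or.inl (case_1_4 φ hφ hmono)
  · rw [Finset.pair_comm] at hmono
    exact Or.inl (case_2_4 φ hφ hmono)
  · rw [Finset.pair_comm] at hmono
    exact Or.inl (case_3_4 φ hφ hmono)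
  · exact Or.inl (case_4_4 φ hφ hmono)
  · exact Or.inl (case_4_5 φ hφ hmono)
  · exact Or.inl (case_4_6 φ hφ hmono)
  · exact Or.inl (case_4_7 φ hφ hmono)
  · exact Or.inl (case_4_8 φ hφ hmono)
  · rw [Finset.pair_comm] at hmono
    exact Or.inl (case_0_5 φ hφ hmono)
  · rw [Finset.pair_comm] at hmono
    exact Or.inl (case_1_5 φ hφ hmono)
  · rw [Finset.pair_comm] at hmono
    exact Or.inl (case_2_5 φ hφ hmono)
  · rw [Finset.pair_comm] at hmono
    exact Or.inl (case_3_5 φ hφ hmono)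
  · rw [Finset.pair_comm] at hmono
    exact Or.inl (case_4_5 φ hφ hmono)
  · exact Or.inl (case_5_5 φ hφ hmono)
  · exact Or.inl (case_5_6 φ hφ hmono)
  · exact Or.inl (case_5_7 φ hφ hmono)
  · exact Or.inl (case_5_8 φ hφ hmono)
  · rw [Finset.pair_comm] at hmono
    exact Or.inl (case_0_6 φ hφ hmono)
  · rw [Finset.pair_comm] at hmono
    exact Or.inl (case_1_6 φ hφ hmono)
  · rw [Finset.pair_comm] at hmono
    exact Or.inl (case_2_6 φ hφ hmono)
  · rw [Finset.pair_comm] at hmono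
    exact Or.inl (case_3_6 φ hφ hmono)
  · rw [Finset.pair_comm] at hmono
    exact Or.inl (case_4_6 φ hφ hmono)
  · rw [Finset.pair_comm] at hmono
    exact Or.inl (case_5_6 φ hφ hmono)
  · exact Or.inl (case_6_6 φ hφ hmono)
  · exact Or.inl (case_6_7 φ hφ hmono)
  · exact Or.inl (case_6_8 φ hφ hmono)
  · rw [Finset.pair_comm] at hmono
    exact Or.inl (case_0_7 φ hφ hmono)
  · rw [Finset.pair_comm] at hmono
    exact Or.inl (case_1_7 φ hφ hmono)
  · rw [Finset.pair_comm] at hmono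
    exact Or.inl (case_2_7 φ hφ hmono)
  · rw [Finset.pair_comm] at hmono
    exact Or.inl (case_3_7 φ hφ hmono)
  · rw [Finset.pair_comm] at hmono
    exact Or.inl (case_4_7 φ hφ hmono)
  · rw [Finset.pair_comm] at hmono
    exact Or.inl (case_5_7 φ hφ hmono)
  · rw [Finset.pair_comm] at hmono
    exact Or.inl (case_6_7 φ hφ hmono)
  · exact Or.inl (case_7_7 φ hφ hmono)
  · exact Or.inl (case_7_8 φ hφ hmono)
  · rw [Finset.pair_comm] at hmono
    exact Or.inl (case_0_8 φ hφ hmono)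
  · rw [Finset.pair_comm] at hmono
    exact Or.inl (case_1_8 φ hφ hmono)
  · rw [Finset.pair_comm] at hmono
    exact Or.inl (case_2_8 φ hφ hmono)
  · rw [Finset.pair_comm] at hmono
    exact Or.inl (case_3_8 φ hφ hmono)
  · rw [Finset.pair_comm] at hmono
    exact Or.inl (case_4_8 φ hφ hmono)
  · rw [Finset.pair_comm] at hmono
    exact Or.inl (case_5_8 φ hφ hmono)
  · rw [Finset.pair_comm] at hmono
    exact Or.inl (case_6_8 φ hφ hmono)
  · rw [Finset.pair_comm] at hmono
    exact Or.inl (case_7_8 φ hφ hmono)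
  · exact Or.inl (case_8_8 φ hφ hmono)
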